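/- The formula f · (x_λ)_{λ∈Φ⁺} := ([x_{λ,0} : f(λ)·x_{λ,0} + x_{λ,1}])_{λ∈Φ⁺}, for f ∈ Hom_ℚ(E, ℂ) and any choice of homogeneous coordinates x_λ = [x_{λ,0} : x_{λ,1}], is well defined and gives an action of the additive group Hom_ℚ(E, ℂ) on (ℙ¹)^{Φ⁺}; the set Z is invariant under this action; and two points x, x′ ∈ Z lie in the same orbit if and only if Fin(x) = Fin(x′). In particular, Z has only finitely many orbits, namely the strata C̊(Ψ) := {x ∈ Z : Fin(x) = Ψ ∩ Φ⁺} indexed by the maximal closed root subsystems Ψ of Φ. -/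

import Mathlib

open scoped Classical
noncomputable section

/-- A reduced crystallographic root system spanning `E`. -/
def IsRootSystem {E : Type*} [AddCommGroup E] [Module ℚ E] (Φ : Set E) : Prop :=
  Φ.Finite ∧ (0 : E) ∉ Φ ∧ Submodule.span ℚ Φ = ⊤ ∧ (∀ α ∈ Φ, -α ∈ Φ) ∧
    (∀ α ∈ Φ, ∃ f : E →ₗ[ℚ] ℚ, f α = 2 ∧ (∀ β ∈ Φ, ∃ n : ℤ, f β = (n : ℚ)) ∧
      ∀ β ∈ Φ, β - f β • α ∈ Φ) ∧
    ∀ α ∈ Φ, ∀ c : ℚ, c • α ∈ Φ → c = 1 ∨ c = -1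

/-- Canonical homogeneous coordinates on `ℙ¹ = ℂ ∪ {∞}`. -/
def coordP1 : OnePoint ℂ → ℂ × ℂ :=
  fun x => Option.elim x (0, 1) fun c => (1, c)

/-- Membership in `Z`. -/
def memZ {E : Type*} [AddCommGroup E] [Module ℚ E] (Φpos : Finset E)
    (x : Φpos → OnePoint ℂ) : Prop :=
  ∀ c : Φpos → ℚ, ∑ l : Φpos, c l • (l : E) = 0 →
    ∑ l ∈ Finset.univ.filter fun l : Φpos => c l ≠ 0,
      (c l : ℂ) * (coordP1 (x l)).2 *
        ∏ m ∈ (Finset.univ.filter fun m : Φpos => c m ≠ 0).erase l, (coordP1 (x m)).1 = 0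

/-- The embedding of the Cartan subalgebra `Hom_ℚ(E, ℂ)` into `(ℙ¹)^{Φ⁺}`. -/
def embH {E : Type*} [AddCommGroup E] [Module ℚ E] (Φpos : Finset E)
    (f : E →ₗ[ℚ] ℂ) : Φpos → OnePoint ℂ :=
  fun l => ((f (l : E) : ℂ) : OnePoint ℂ)

/-- `Ψ` is a closed root subsystem of `Θ`. -/
def IsClosedSub {E : Type*} [AddCommGroup E] (Θ Ψ : Set E) : Prop :=
  Ψ ⊆ Θ ∧ (∀ l ∈ Ψ, -l ∈ Ψ) ∧ ∀ l ∈ Ψ, ∀ m ∈ Ψ, l + m ∈ Θ → l + m ∈ Ψ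

/-- The rank of a subset: the dimension of its `ℚ`-linear span. -/
def rankOf {E : Type*} [AddCommGroup E] [Module ℚ E] (Ψ : Set E) : ℕ :=
  Module.finrank ℚ (Submodule.span ℚ Ψ)

/-- `Ψ` is a maximal closed root subsystem of `Θ` of rank `m`. -/
def IsMaxClosedOfRank {E : Type*} [AddCommGroup E] [Module ℚ E] (Θ Ψ : Set E) (m : ℕ) : Prop :=
  IsClosedSub Θ Ψ ∧ rankOf Ψ = m ∧
    ∀ Ψ' : Set E, IsClosedSub Θ Ψ' → rankOf Ψ' = m → Ψ ⊆ Ψ' → Ψ' = Ψ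


/-- `Fin(x)`: the set of positive roots where `x` has a finite coordinate. -/
def finSet {E : Type*} [AddCommGroup E] [Module ℚ E] (Φpos : Finset E)
    (x : Φpos → OnePoint ℂ) : Set E :=
  {l : E | ∃ h : l ∈ Φpos, x ⟨l, h⟩ ≠ OnePoint.infty}

/-- The action of `f ∈ Hom_ℚ(E, ℂ)` on `(ℙ¹)^{Φ⁺}`:
`[x₀ : x₁] ↦ [x₀ : f(λ)·x₀ + x₁]` in the `λ`-coordinate, i.e. a finite coordinate `c`
becomes `f(λ) + c` and `∞` stays `∞`. -/
def actH {E : Type*} [AddCommGroup E] [Module ℚ E] (Φpos : Finset E)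
    (f : E →ₗ[ℚ] ℂ) (x : Φpos → OnePoint ℂ) : Φpos → OnePoint ℂ :=
  fun l => Option.map (fun c => f (l : E) + c) (x l)


/-! ### Auxiliary lemmas -/

/-- Finite value of a point of `ℙ¹`. -/
def valP (y : OnePoint ℂ) : ℂ := Option.elim y 0 id

lemma coordP1_infty' : coordP1 OnePoint.infty = (0, 1) := rfl

lemma coordP1_eq_of_ne (y : OnePoint ℂ) (h : y ≠ OnePoint.infty) :
    coordP1 y = (1, valP y) := by
  induction y using OnePoint.rec with
  | infty => exact absurd rfl h
  | coe v => rfl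

lemma exists_lin_extend {E : Type*} [AddCommGroup E] [Module ℚ E]
    (ι : Type*) [Fintype ι] (v : ι → E) (d : ι → ℂ)
    (h : ∀ c : ι → ℚ, ∑ i, c i • v i = 0 → ∑ i, (c i : ℂ) * d i = 0) :
    ∃ f : E →ₗ[ℚ] ℂ, ∀ i, f (v i) = d i := by
  classical
  set T : (ι →₀ ℚ) →ₗ[ℚ] E := Finsupp.linearCombination ℚ v with hT
  set D : (ι →₀ ℚ) →ₗ[ℚ] ℂ := Finsupp.linearCombination ℚ d with hD
  have hsum : ∀ (c : ι →₀ ℚ), T c = ∑ i, c i • v i := by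
    intro c
    rw [hT, Finsupp.linearCombination_apply, Finsupp.sum_fintype]
    intro i; simp
  have hsumD : ∀ (c : ι →₀ ℚ), D c = ∑ i, (c i : ℂ) * d i := by
    intro c
    rw [hD, Finsupp.linearCombination_apply, Finsupp.sum_fintype]
    · exact Finset.sum_congr rfl fun i _ => Rat.smul_def _ _
    · intro i; simp
  have hker : LinearMap.ker T ≤ LinearMap.ker D := by
    intro c hc
    rw [LinearMap.mem_ker] at hc ⊢
    rw [hsumD]
    exact h _ (by rw [← hsum]; exact hc)
  set Dbar := (LinearMap.ker T).liftQ D hker with hDbar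
  set e := LinearMap.quotKerEquivRange T with he
  obtain ⟨g, hg⟩ := LinearMap.exists_extend (Dbar ∘ₗ (e.symm : (LinearMap.range T) →ₗ[ℚ] _))
  refine ⟨g, fun i => ?_⟩
  have hv : v i = T (Finsupp.single i 1) := by
    rw [hsum]; simp [Finsupp.single_apply, ite_smul]
  have hmem : v i ∈ LinearMap.range T := ⟨Finsupp.single i 1, hv.symm⟩
  have hgi := congrArg (fun k => k ⟨v i, hmem⟩) hg
  simp only [LinearMap.comp_apply, Submodule.subtype_apply] at hgi
  rw [hgi]
  have hesymm : e.symm ⟨v i, hmem⟩ = Submodule.Quotient.mk (Finsupp.single i 1) := by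
    rw [LinearEquiv.symm_apply_eq, he]
    ext
    rw [LinearMap.quotKerEquivRange_apply_mk]
    exact hv
  simp only [LinearEquiv.coe_coe]
  rw [hesymm, hDbar, Submodule.liftQ_apply, hsumD]
  rw [Finset.sum_eq_single i] <;> simp_all [Finsupp.single_apply]

section Aux

variable {E : Type*} [AddCommGroup E] [Module ℚ E] (Φpos : Finset E)

/-- The sum appearing in the definition of `Z`. -/
def zsum (x : Φpos → OnePoint ℂ) (c : Φpos → ℚ) : ℂ :=
  ∑ l ∈ Finset.univ.filter fun l : Φpos => c l ≠ 0,
    (c l : ℂ) * (coordP1 (x l)).2 *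
      ∏ m ∈ (Finset.univ.filter fun m : Φpos => c m ≠ 0).erase l, (coordP1 (x m)).1

lemma memZ_iff_zsum (x : Φpos → OnePoint ℂ) :
    memZ Φpos x ↔ ∀ c : Φpos → ℚ, ∑ l : Φpos, c l • (l : E) = 0 → zsum Φpos x c = 0 :=
  Iff.rfl

lemma zsum_all_finite (x : Φpos → OnePoint ℂ) (c : Φpos → ℚ)
    (hfin : ∀ l : Φpos, c l ≠ 0 → x l ≠ OnePoint.infty) :
    zsum Φpos x c = ∑ l : Φpos, (c l : ℂ) * valP (x l) := by
  rw [zsum]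
  have h1 : ∀ l ∈ Finset.univ.filter fun l : Φpos => c l ≠ 0,
      (c l : ℂ) * (coordP1 (x l)).2 *
        ∏ m ∈ (Finset.univ.filter fun m : Φpos => c m ≠ 0).erase l, (coordP1 (x m)).1
      = (c l : ℂ) * valP (x l) := by
    intro l hl
    rw [Finset.mem_filter] at hl
    rw [coordP1_eq_of_ne _ (hfin l hl.2)]
    rw [Finset.prod_eq_one fun m hm => ?_, mul_one]
    rw [Finset.mem_erase, Finset.mem_filter] at hm
    rw [coordP1_eq_of_ne _ (hfin m hm.2.2)]
  rw [Finset.sum_congr rfl h1]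
  refine Finset.sum_filter_of_ne fun l _ h => ?_
  intro hc; rw [hc] at h; simp at h

lemma zsum_one_infinite (x : Φpos → OnePoint ℂ) (c : Φpos → ℚ) (l0 : Φpos)
    (h0 : c l0 ≠ 0) (hinf : x l0 = OnePoint.infty)
    (hfin : ∀ l : Φpos, c l ≠ 0 → l ≠ l0 → x l ≠ OnePoint.infty) :
    zsum Φpos x c = (c l0 : ℂ) := by
  rw [zsum]
  have hl0 : l0 ∈ Finset.univ.filter fun l : Φpos => c l ≠ 0 := by
    simp [h0]
  rw [Finset.sum_eq_single l0]
  · rw [hinf, coordP1_infty']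
    rw [Finset.prod_eq_one fun m hm => ?_]
    · ring
    · rw [Finset.mem_erase, Finset.mem_filter] at hm
      rw [coordP1_eq_of_ne _ (hfin m hm.2.2 hm.1)]
  · intro b hb hbne
    rw [Finset.mem_filter] at hb
    have : l0 ∈ ((Finset.univ.filter fun m : Φpos => c m ≠ 0).erase b) :=
      Finset.mem_erase.mpr ⟨Ne.symm hbne, hl0⟩
    rw [Finset.prod_eq_zero this (by rw [hinf]; rfl), mul_zero]
  · intro h; exact absurd hl0 h

lemma zsum_actH (f : E →ₗ[ℚ] ℂ) (x : Φpos → OnePoint ℂ) (c : Φpos → ℚ)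
    (hc : ∑ l : Φpos, c l • (l : E) = 0) :
    zsum Φpos (actH Φpos f x) c = zsum Φpos x c := by
  have hco : ∀ l : Φpos, coordP1 (actH Φpos f x l)
      = ((coordP1 (x l)).1, (coordP1 (x l)).2 + f (l : E) * (coordP1 (x l)).1) := by
    intro l
    show coordP1 (Option.map _ (x l)) = _
    induction x l using OnePoint.rec with
    | infty => simp [coordP1, OnePoint.infty]
    | coe v => simp [coordP1, OnePoint.some, add_comm]
  set S := Finset.univ.filter fun l : Φpos => c l ≠ 0 with hS
  have key : ∑ l ∈ S, (c l : ℂ) * f (l : E) = 0 := by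
    have h1 : ∑ l : Φpos, (c l : ℂ) * f (l : E) = 0 := by
      have h2 := congrArg f hc
      rw [map_sum, map_zero] at h2
      rw [← h2]
      refine Finset.sum_congr rfl fun l _ => ?_
      rw [map_smul, Rat.smul_def]
    rw [← h1]
    refine Finset.sum_filter_of_ne fun l _ h => ?_
    intro hc0; rw [hc0] at h; simp at h
  calc zsum Φpos (actH Φpos f x) c
      = ∑ l ∈ S, ((c l : ℂ) * (coordP1 (x l)).2 *
          ∏ m ∈ S.erase l, (coordP1 (x m)).1
        + (c l : ℂ) * f (l : E) *
          ((coordP1 (x l)).1 * ∏ m ∈ S.erase l, (coordP1 (x m)).1)) := by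
        rw [zsum]
        refine Finset.sum_congr rfl fun l hl => ?_
        rw [hco]
        have hprod : ∀ l' : Φpos, ∏ m ∈ S.erase l', (coordP1 (actH Φpos f x m)).1
            = ∏ m ∈ S.erase l', (coordP1 (x m)).1 :=
          fun l' => Finset.prod_congr rfl fun m _ => by rw [hco]
        rw [hprod]
        ring
    _ = zsum Φpos x c + ∑ l ∈ S, (c l : ℂ) * f (l : E) * ∏ m ∈ S, (coordP1 (x m)).1 := by
        rw [Finset.sum_add_distrib, zsum]
        congr 1
        refine Finset.sum_congr rfl fun l hl => ?_
        rw [Finset.mul_prod_erase S (fun m => (coordP1 (x m)).1) hl]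
    _ = zsum Φpos x c := by
        rw [← Finset.sum_mul, key, zero_mul, add_zero]

lemma mem_finSet_iff (x : Φpos → OnePoint ℂ) (l : Φpos) :
    (l : E) ∈ finSet Φpos x ↔ x l ≠ OnePoint.infty := by
  constructor
  · rintro ⟨h, hne⟩
    rwa [Subtype.coe_eta] at hne
  · intro h
    exact ⟨l.2, by rwa [Subtype.coe_eta]⟩

lemma finSet_subset (x : Φpos → OnePoint ℂ) : finSet Φpos x ⊆ (Φpos : Set E) := by
  rintro e ⟨h, _⟩; exact h

lemma finSet_eq_iff (x y : Φpos → OnePoint ℂ) :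
    finSet Φpos x = finSet Φpos y ↔
      ∀ l : Φpos, (x l ≠ OnePoint.infty ↔ y l ≠ OnePoint.infty) := by
  constructor
  · intro h l
    rw [← mem_finSet_iff, ← mem_finSet_iff, h]
  · intro h
    ext e
    constructor
    · rintro ⟨he, hne⟩
      exact ⟨he, (h ⟨e, he⟩).mp hne⟩
    · rintro ⟨he, hne⟩
      exact ⟨he, (h ⟨e, he⟩).mpr hne⟩

lemma actH_ne_infty_iff (f : E →ₗ[ℚ] ℂ) (x : Φpos → OnePoint ℂ) (l : Φpos) :
    actH Φpos f x l ≠ OnePoint.infty ↔ x l ≠ OnePoint.infty := by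
  show Option.map _ (x l) ≠ none ↔ x l ≠ none
  rw [not_iff_not]
  exact Option.map_eq_none_iff

lemma finSet_actH (f : E →ₗ[ℚ] ℂ) (x : Φpos → OnePoint ℂ) :
    finSet Φpos (actH Φpos f x) = finSet Φpos x :=
  (finSet_eq_iff _ _ _).mpr fun l => actH_ne_infty_iff _ f x l

end Aux


lemma sum_extend_subtype {α : Type*} {M : Type*} [Fintype α] [AddCommMonoid M] (P : α → Prop)
    [Fintype (Subtype P)]
    (c : Subtype P → ℚ) (c' : α → ℚ) (hcpos : ∀ i : Subtype P, c' ↑i = c i)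
    (hcneg : ∀ l, ¬ P l → c' l = 0) (f : α → ℚ → M) (hf : ∀ l, f l 0 = 0) :
    ∑ l : α, f l (c' l) = ∑ i : Subtype P, f ↑i (c i) := by
  classical
  have h1 : ∑ l ∈ Finset.univ.filter P, f l (c' l) = ∑ l : α, f l (c' l) := by
    refine Finset.sum_filter_of_ne fun l _ h => ?_
    by_contra hP
    rw [hcneg l hP, hf] at h
    exact h rfl
  rw [← h1]
  refine Finset.sum_bij' (fun a ha => (⟨a, (Finset.mem_filter.mp ha).2⟩ : Subtype P))
    (fun i _ => (i : α)) ?_ ?_ ?_ ?_ ?_ <;>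
    simp_all [← hcpos]
theorem statement6 {E : Type*} [AddCommGroup E] [Module ℚ E] [FiniteDimensional ℚ E]
    (hr : 1 ≤ Module.finrank ℚ E)
    (Φ : Set E) (hΦ : IsRootSystem Φ)
    (ℓ : E →ₗ[ℚ] ℚ) (hℓ : ∀ α ∈ Φ, ℓ α ≠ 0)
    (Φpos : Finset E) (hpos : ∀ a : E, a ∈ Φpos ↔ a ∈ Φ ∧ 0 < ℓ a) :
    -- the formula defines an action of the additive group `Hom_ℚ(E, ℂ)`
    (∀ x : Φpos → OnePoint ℂ, actH Φpos 0 x = x) ∧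
    (∀ (f g : E →ₗ[ℚ] ℂ) (x : Φpos → OnePoint ℂ),
      actH Φpos (f + g) x = actH Φpos f (actH Φpos g x)) ∧
    -- `Z` is invariant
    (∀ (f : E →ₗ[ℚ] ℂ) (x : Φpos → OnePoint ℂ), memZ Φpos x → memZ Φpos (actH Φpos f x)) ∧
    -- two points of `Z` lie in the same orbit iff they have the same finite part
    (∀ x x' : Φpos → OnePoint ℂ, memZ Φpos x → memZ Φpos x' →
      ((∃ f : E →ₗ[ℚ] ℂ, actH Φpos f x = x') ↔ finSet Φpos x = finSet Φpos x')) ∧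
    -- the orbits are the strata indexed by maximal closed root subsystems
    (∀ x : Φpos → OnePoint ℂ, memZ Φpos x → ∃ Ψ : Set E,
      IsMaxClosedOfRank Φ Ψ (rankOf Ψ) ∧
      {y : Φpos → OnePoint ℂ | ∃ f : E →ₗ[ℚ] ℂ, actH Φpos f x = y}
        = {y : Φpos → OnePoint ℂ | memZ Φpos y ∧ finSet Φpos y = Ψ ∩ (Φpos : Set E)}) ∧
    -- in particular, there are only finitely many orbits in `Z`
    Set.Finite {S : Set (Φpos → OnePoint ℂ) |
      ∃ x : Φpos → OnePoint ℂ, memZ Φpos x ∧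
        S = {y : Φpos → OnePoint ℂ | ∃ f : E →ₗ[ℚ] ℂ, actH Φpos f x = y}} := by
  classical
  have part1 : ∀ x : Φpos → OnePoint ℂ, actH Φpos 0 x = x := by
    intro x; funext l
    show Option.map _ (x l) = x l
    have h : (fun c : ℂ => (0 : E →ₗ[ℚ] ℂ) (l : E) + c) = id := by funext c; simp
    rw [h]
    exact congrFun Option.map_id (x l)
  have part2 : ∀ (f g : E →ₗ[ℚ] ℂ) (x : Φpos → OnePoint ℂ),
      actH Φpos (f + g) x = actH Φpos f (actH Φpos g x) := by
    intro f g x; funext l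
    show Option.map _ (x l) = Option.map _ (Option.map _ (x l))
    refine Eq.trans ?_ (Option.map_map _ _ (x l)).symm
    congr 1
    funext v
    simp [Function.comp, add_assoc]
  have part3 : ∀ (f : E →ₗ[ℚ] ℂ) (x : Φpos → OnePoint ℂ),
      memZ Φpos x → memZ Φpos (actH Φpos f x) := by
    intro f x hx
    rw [memZ_iff_zsum] at hx ⊢
    intro c hc
    rw [zsum_actH Φpos f x c hc]
    exact hx c hc
  have part4 : ∀ x x' : Φpos → OnePoint ℂ, memZ Φpos x → memZ Φpos x' →
      ((∃ f : E →ₗ[ℚ] ℂ, actH Φpos f x = x') ↔ finSet Φpos x = finSet Φpos x') := by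
    intro x x' hx hx'
    constructor
    · rintro ⟨f, rfl⟩
      exact (finSet_actH Φpos f x).symm
    · intro hfs
      have hP' : ∀ l : Φpos, (x l ≠ OnePoint.infty ↔ x' l ≠ OnePoint.infty) :=
        (finSet_eq_iff Φpos x x').mp hfs
      set P : Φpos → Prop := fun l => x l ≠ OnePoint.infty with hPdef
      have hcons : ∀ c : Subtype P → ℚ,
          ∑ i : Subtype P, c i • ((i : Φpos) : E) = 0 →
          ∑ i : Subtype P, (c i : ℂ) * (valP (x' i) - valP (x i)) = 0 := by
        intro c hcrel
        set c' : Φpos → ℚ := fun l => if h : P l then c ⟨l, h⟩ else 0 with hc'def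
        have hcpos : ∀ i : Subtype P, c' ↑i = c i := by
          intro i
          simp only [hc'def, dif_pos i.2, Subtype.coe_eta]
        have hcneg : ∀ l, ¬ P l → c' l = 0 := by
          intro l hP
          simp only [hc'def, dif_neg hP]
        have hc'P : ∀ l : Φpos, c' l ≠ 0 → P l := by
          intro l h
          by_contra hP
          exact h (hcneg l (fun hne => hne hP))
        have hrel' : ∑ l : Φpos, c' l • (l : E) = 0 := by
          rw [sum_extend_subtype P c c' hcpos hcneg (fun l q => q • (l : E))
            (fun l => zero_smul ℚ _)]
          exact hcrel
        have hzx : ∑ l : Φpos, (c' l : ℂ) * valP (x l) = 0 := by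
          have hz := (memZ_iff_zsum Φpos x).mp hx _ hrel'
          rwa [zsum_all_finite Φpos x _ hc'P] at hz
        have hzx' : ∑ l : Φpos, (c' l : ℂ) * valP (x' l) = 0 := by
          have hz := (memZ_iff_zsum Φpos x').mp hx' _ hrel'
          rwa [zsum_all_finite Φpos x' _ (fun l h => (hP' l).mp (hc'P l h))] at hz
        have e1 : ∑ l : Φpos, (c' l : ℂ) * valP (x l)
            = ∑ i : Subtype P, (c i : ℂ) * valP (x i) :=
          sum_extend_subtype P c c' hcpos hcneg (fun l q => (q : ℂ) * valP (x l))
            (fun l => by simp)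
        have e2 : ∑ l : Φpos, (c' l : ℂ) * valP (x' l)
            = ∑ i : Subtype P, (c i : ℂ) * valP (x' i) :=
          sum_extend_subtype P c c' hcpos hcneg (fun l q => (q : ℂ) * valP (x' l))
            (fun l => by simp)
        calc ∑ i : Subtype P, (c i : ℂ) * (valP (x' i) - valP (x i))
            = ∑ i : Subtype P, ((c i : ℂ) * valP (x' i) - (c i : ℂ) * valP (x i)) := by
              refine Finset.sum_congr rfl fun i _ => ?_
              ring
          _ = ∑ i : Subtype P, (c i : ℂ) * valP (x' i)
              - ∑ i : Subtype P, (c i : ℂ) * valP (x i) := Finset.sum_sub_distrib _ _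
          _ = 0 := by rw [← e1, ← e2, hzx, hzx', sub_zero]
      obtain ⟨f, hf⟩ := exists_lin_extend (Subtype P) (fun i => ((i : Φpos) : E))
        (fun i => valP (x' i) - valP (x i)) hcons
      refine ⟨f, funext fun l => ?_⟩
      by_cases hl : x l ≠ OnePoint.infty
      · obtain ⟨v, hv⟩ := OnePoint.ne_infty_iff_exists.mp hl
        obtain ⟨v', hv'⟩ := OnePoint.ne_infty_iff_exists.mp ((hP' l).mp hl)
        have hfl : f (l : E) = valP (x' l) - valP (x l) := hf ⟨l, hl⟩
        show Option.map _ (x l) = x' l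
        rw [← hv, ← hv']
        show Option.some (f (l : E) + v) = Option.some v'
        congr 1
        rw [hfl, ← hv, ← hv']
        show valP (Option.some v') - valP (Option.some v) + v = v'
        simp [valP]
      · push_neg at hl
        have hl' : x' l = OnePoint.infty := by
          by_contra h
          exact ((hP' l).mpr h) (by rw [hl])
        show Option.map _ (x l) = x' l
        rw [hl, hl']
        rfl
  have orbitEq : ∀ x : Φpos → OnePoint ℂ, memZ Φpos x →
      {y : Φpos → OnePoint ℂ | ∃ f : E →ₗ[ℚ] ℂ, actH Φpos f x = y}
        = {y : Φpos → OnePoint ℂ | memZ Φpos y ∧ finSet Φpos y = finSet Φpos x} := by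
    intro x hx
    ext y
    constructor
    · rintro ⟨f, rfl⟩
      exact ⟨part3 f x hx, finSet_actH Φpos f x⟩
    · rintro ⟨hy, hfs⟩
      exact (part4 x y hx hy).mpr hfs.symm
  have part5 : ∀ x : Φpos → OnePoint ℂ, memZ Φpos x → ∃ Ψ : Set E,
      IsMaxClosedOfRank Φ Ψ (rankOf Ψ) ∧
      {y : Φpos → OnePoint ℂ | ∃ f : E →ₗ[ℚ] ℂ, actH Φpos f x = y}
        = {y : Φpos → OnePoint ℂ | memZ Φpos y ∧ finSet Φpos y = Ψ ∩ (Φpos : Set E)} := by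
    intro x hx
    set Ψ : Set E := ↑(Submodule.span ℚ (finSet Φpos x)) ∩ Φ with hΨdef
    have hΦposΦ : (Φpos : Set E) ⊆ Φ := fun e he => ((hpos e).mp he).1
    have hfinΦ : finSet Φpos x ⊆ Φ := fun e he => hΦposΦ (finSet_subset Φpos x he)
    have hKL : ∀ β : Φpos, (β : E) ∈ Submodule.span ℚ (finSet Φpos x) →
        x β ≠ OnePoint.infty := by
      intro β hsp hinf
      obtain ⟨c, hsupp, hsum⟩ := Submodule.mem_span_set.mp hsp
      have hβfin : (β : E) ∉ finSet Φpos x := by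
        rw [mem_finSet_iff]
        exact fun h => h hinf
      have hcβ : c (β : E) = 0 := by
        by_contra h
        exact hβfin (hsupp (Finsupp.mem_support_iff.mpr h))
      have hsuppΦ : c.support ⊆ Φpos := fun e he => finSet_subset Φpos x (hsupp he)
      have hA : ∑ l : Φpos, c (l : E) • (l : E) = (β : E) := by
        rw [Finset.sum_coe_sort Φpos (fun e => c e • e), ← hsum, Finsupp.sum]
        exact (Finset.sum_subset hsuppΦ fun e _ he => by
          rw [Finsupp.notMem_support_iff.mp he, zero_smul]).symm
      set c' : Φpos → ℚ := fun l => if l = β then -1 else c (l : E) with hc'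
      have hrel : ∑ l : Φpos, c' l • (l : E) = 0 := by
        have hsplit : ∀ l : Φpos,
            c' l • (l : E) = c (l : E) • (l : E) + (if l = β then (-1 : ℚ) • (l : E) else 0) := by
          intro l
          by_cases h : l = β
          · subst h; rw [hc']; simp [hcβ]
          · rw [hc']; simp [h]
        rw [Finset.sum_congr rfl fun l _ => hsplit l, Finset.sum_add_distrib, hA,
          Finset.sum_ite_eq' Finset.univ β (fun l => (-1 : ℚ) • (l : E))]
        simp
      have hz := (memZ_iff_zsum Φpos x).mp hx c' hrel
      rw [zsum_one_infinite Φpos x c' β (by simp [hc']) hinf ?_] at hz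
      · simp [hc'] at hz
      · intro l hcl hlβ
        rw [← mem_finSet_iff]
        apply hsupp
        rw [Finset.mem_coe, Finsupp.mem_support_iff]
        simp only [hc', if_neg hlβ] at hcl
        exact hcl
    have hcap : Ψ ∩ (Φpos : Set E) = finSet Φpos x := by
      ext e
      constructor
      · rintro ⟨⟨hsp, _⟩, hposmem⟩
        exact (mem_finSet_iff Φpos x ⟨e, hposmem⟩).mpr (hKL ⟨e, hposmem⟩ hsp)
      · intro he
        exact ⟨⟨Submodule.subset_span he, hfinΦ he⟩, finSet_subset Φpos x he⟩
    have hclosed : IsClosedSub Φ Ψ := by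
      refine ⟨Set.inter_subset_right, ?_, ?_⟩
      · rintro l ⟨hsp, hl⟩
        exact ⟨Submodule.neg_mem _ hsp, hΦ.2.2.2.1 l hl⟩
      · rintro l ⟨hls, _⟩ m ⟨hms, _⟩ hlm
        exact ⟨Submodule.add_mem _ hls hms, hlm⟩
    have hspanΨ : Submodule.span ℚ Ψ = Submodule.span ℚ (finSet Φpos x) := by
      apply le_antisymm
      · rw [Submodule.span_le]
        exact Set.inter_subset_left
      · exact Submodule.span_mono fun e he =>
          ⟨Submodule.subset_span he, hfinΦ he⟩
    refine ⟨Ψ, ⟨hclosed, rfl, ?_⟩, ?_⟩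
    · intro Ψ' hΨ' hrank hsub
      have heq : Submodule.span ℚ Ψ = Submodule.span ℚ Ψ' :=
        Submodule.eq_of_le_of_finrank_eq (Submodule.span_mono hsub) hrank.symm
      refine Set.Subset.antisymm (fun e he => ?_) hsub
      refine ⟨?_, hΨ'.1 he⟩
      rw [← hspanΨ, heq]
      exact Submodule.subset_span he
    · rw [orbitEq x hx, hcap]
  refine ⟨part1, part2, part3, part4, part5, ?_⟩
  have hsub : {S : Set (Φpos → OnePoint ℂ) |
      ∃ x : Φpos → OnePoint ℂ, memZ Φpos x ∧
        S = {y : Φpos → OnePoint ℂ | ∃ f : E →ₗ[ℚ] ℂ, actH Φpos f x = y}}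
      ⊆ Set.range (fun A : Set Φpos =>
        {y : Φpos → OnePoint ℂ | memZ Φpos y ∧
          ∀ l : Φpos, (y l ≠ OnePoint.infty ↔ l ∈ A)}) := by
    rintro S ⟨x, hx, rfl⟩
    refine ⟨{l : Φpos | x l ≠ OnePoint.infty}, ?_⟩
    rw [orbitEq x hx]
    ext y
    simp only [Set.mem_setOf_eq]
    constructor
    · rintro ⟨hy, hall⟩
      exact ⟨hy, (finSet_eq_iff Φpos y x).mpr hall⟩
    · rintro ⟨hy, hfs⟩
      exact ⟨hy, (finSet_eq_iff Φpos y x).mp hfs⟩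
  exact Set.Finite.subset (Set.finite_range _) hsub
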